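/- (Dominated Convergence Theorem) Let (X, 𝒰, ∫) be a complete Daniell space, let f_n ∈ 𝒰 be a sequence of functions converging to a function f : X → ℝ at all points outside a null set, and suppose there exists h ∈ 𝒰 such that |f_n(x)| ≤ h(x) for all x ∈ X and all n ∈ ℕ. Then f ∈ 𝒰 and ∫|f_n − f| → 0. -/

import Mathlib

open Filter Topology

/-- A Daniell space: a Riesz space `U` of real-valued functions on `X` together with a
positive linear functional `integral` satisfying the Daniell continuity condition (II). -/
structure DaniellSpace (X : Type*) where
  U : Set (X → ℝ)
  integral : (X → ℝ) → ℝ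
  zero_mem : (0 : X → ℝ) ∈ U
  add_mem : ∀ {f g : X → ℝ}, f ∈ U → g ∈ U → f + g ∈ U
  smul_mem : ∀ (c : ℝ) {f : X → ℝ}, f ∈ U → c • f ∈ U
  sup_mem : ∀ {f g : X → ℝ}, f ∈ U → g ∈ U → f ⊔ g ∈ U
  inf_mem : ∀ {f g : X → ℝ}, f ∈ U → g ∈ U → f ⊓ g ∈ U
  integral_add : ∀ {f g : X → ℝ}, f ∈ U → g ∈ U →
    integral (f + g) = integral f + integral g
  integral_smul : ∀ (c : ℝ) {f : X → ℝ}, f ∈ U → integral (c • f) = c * integral f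
  integral_nonneg : ∀ {f : X → ℝ}, f ∈ U → (∀ x, 0 ≤ f x) → 0 ≤ integral f
  integral_tendsto_zero : ∀ f : ℕ → X → ℝ, (∀ n, f n ∈ U) → Antitone f →
    (∀ x, Tendsto (fun n => f n x) atTop (𝓝 (0 : ℝ))) →
    Tendsto (fun n => integral (f n)) atTop (𝓝 (0 : ℝ))

/-- `f ≃ ∑ fₙ` : the `fₙ` belong to `U`, `∑ ∫|fₙ| < ∞`, and `f x = ∑ fₙ x` at every
point where the series converges absolutely. -/
def DaniellSpace.Rep {X : Type*} (D : DaniellSpace X) (f : X → ℝ) (fs : ℕ → X → ℝ) : Prop :=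
  (∀ n, fs n ∈ D.U) ∧ (Summable fun n => D.integral |fs n|) ∧
  ∀ x, (Summable fun n => |fs n x|) → HasSum (fun n => fs n x) (f x)

/-- The extension `𝒰*` of `𝒰`. -/
def DaniellSpace.Ustar {X : Type*} (D : DaniellSpace X) : Set (X → ℝ) :=
  {f | ∃ fs, D.Rep f fs}

-- The integral on `𝒰*`: `∫ f = ∑ ∫ fₙ` for any representation `f ≃ ∑ fₙ`
-- (the value is independent of the representation).
open Classical in
noncomputable def DaniellSpace.integralStar {X : Type*} (D : DaniellSpace X)
    (f : X → ℝ) : ℝ :=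
  if h : ∃ fs, D.Rep f fs then ∑' n, D.integral (h.choose n) else 0

/-- A Daniell space is complete if `f ≃ ∑ fₙ` with all `fₙ ∈ 𝒰` implies `f ∈ 𝒰`. -/
def DaniellSpace.Complete {X : Type*} (D : DaniellSpace X) : Prop :=
  ∀ (f : X → ℝ) (fs : ℕ → X → ℝ), D.Rep f fs → f ∈ D.U

/-- A null set: its characteristic function is a null function. -/
def DaniellSpace.NullSet {X : Type*} (D : DaniellSpace X) (S : Set X) : Prop :=
  S.indicator (fun _ => (1 : ℝ)) ∈ D.U ∧ D.integral (S.indicator fun _ => (1 : ℝ)) = 0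

namespace DaniellSpace

variable {X : Type*} (D : DaniellSpace X)

theorem negMem {f : X → ℝ} (hf : f ∈ D.U) : -f ∈ D.U := by
  have := D.smul_mem (-1) hf
  rwa [neg_one_smul] at this

theorem subMem {f g : X → ℝ} (hf : f ∈ D.U) (hg : g ∈ D.U) : f - g ∈ D.U := by
  rw [sub_eq_add_neg]
  exact D.add_mem hf (D.negMem hg)

theorem absMem {f : X → ℝ} (hf : f ∈ D.U) : |f| ∈ D.U := by
  have h1 : |f| = f ⊔ (-f) := by
    funext x
    rw [Pi.sup_apply, Pi.neg_apply, Pi.abs_apply, abs_eq_max_neg]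
  rw [h1]; exact D.sup_mem hf (D.negMem hf)

theorem integralNeg {f : X → ℝ} (hf : f ∈ D.U) : D.integral (-f) = -D.integral f := by
  have := D.integral_smul (-1) hf
  rw [neg_one_smul] at this
  linarith

theorem integralSub {f g : X → ℝ} (hf : f ∈ D.U) (hg : g ∈ D.U) :
    D.integral (f - g) = D.integral f - D.integral g := by
  have h1 := D.integral_add (D.subMem hf hg) hg
  rw [sub_add_cancel] at h1
  linarith

theorem integralMono {f g : X → ℝ} (hf : f ∈ D.U) (hg : g ∈ D.U)
    (hle : ∀ x, f x ≤ g x) : D.integral f ≤ D.integral g := by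
  have h0 := D.integral_nonneg (D.subMem hg hf)
    (fun x => by simpa using sub_nonneg.mpr (hle x))
  have h1 := D.integralSub hg hf
  linarith


theorem integralEqZeroOnNull {S : Set X} (hS : D.NullSet S) {g : X → ℝ}
    (hg : g ∈ D.U) (hg0 : ∀ x, 0 ≤ g x) (hgS : ∀ x, x ∉ S → g x = 0) :
    D.integral g = 0 := by
  set χ : X → ℝ := S.indicator (fun _ => 1) with hχdef
  have hχU : χ ∈ D.U := hS.1
  have hχ0 : ∀ x, 0 ≤ χ x := fun x => Set.indicator_nonneg (fun _ _ => zero_le_one) x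
  have hinfU : ∀ n : ℕ, g ⊓ ((n : ℝ) • χ) ∈ D.U := fun n =>
    D.inf_mem hg (D.smul_mem _ hχU)
  have hmem : ∀ n : ℕ, g - g ⊓ ((n : ℝ) • χ) ∈ D.U := fun n => D.subMem hg (hinfU n)
  have key : Tendsto (fun n : ℕ => D.integral (g - g ⊓ ((n : ℝ) • χ))) atTop (𝓝 0) := by
    apply D.integral_tendsto_zero _ hmem
    · intro a b hab
      rw [Pi.le_def]
      intro x
      simp only [Pi.sub_apply, Pi.inf_apply, Pi.smul_apply, smul_eq_mul]
      have h1 : (a : ℝ) * χ x ≤ (b : ℝ) * χ x :=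
        mul_le_mul_of_nonneg_right (by exact_mod_cast hab) (hχ0 x)
      have h2 : g x ⊓ ((a : ℝ) * χ x) ≤ g x ⊓ ((b : ℝ) * χ x) := inf_le_inf_left _ h1
      linarith
    · intro x
      by_cases hx : x ∈ S
      · have hev : (fun _ : ℕ => (0 : ℝ)) =ᶠ[atTop]
            fun n : ℕ => (g - g ⊓ ((n : ℝ) • χ)) x := by
          filter_upwards [eventually_ge_atTop (Nat.ceil (g x))] with n hn
          have hnx : g x ≤ (n : ℝ) := (Nat.le_ceil _).trans (by exact_mod_cast hn)
          have hχx : χ x = 1 := by rw [hχdef]; exact Set.indicator_of_mem hx _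
          simp only [Pi.sub_apply, Pi.inf_apply, Pi.smul_apply, smul_eq_mul, hχx, mul_one,
            min_eq_left hnx, sub_self]
        exact Tendsto.congr' hev tendsto_const_nhds
      · have hχx : χ x = 0 := by rw [hχdef]; exact Set.indicator_of_notMem hx _
        have : ∀ n : ℕ, (g - g ⊓ ((n : ℝ) • χ)) x = 0 := by
          intro n
          simp only [Pi.sub_apply, Pi.inf_apply, Pi.smul_apply, smul_eq_mul, hχx, mul_zero,
            hgS x hx, min_self, sub_self]
        simpa only [this] using tendsto_const_nhds
  have h2 : ∀ n : ℕ, D.integral (g ⊓ ((n : ℝ) • χ)) = 0 := by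
    intro n
    apply le_antisymm
    · have hle := D.integralMono (hinfU n) (D.smul_mem (n : ℝ) hχU)
        (fun x => by simp only [Pi.inf_apply]; exact inf_le_right)
      have h3 := D.integral_smul (n : ℝ) hχU
      rw [show D.integral χ = 0 from hS.2] at h3
      rw [h3, mul_zero] at hle
      exact hle
    · exact D.integral_nonneg (hinfU n) (fun x => by
        simp only [Pi.inf_apply, Pi.smul_apply, smul_eq_mul]
        exact le_inf (hg0 x) (mul_nonneg (Nat.cast_nonneg n) (hχ0 x)))
  have heq : ∀ n : ℕ, D.integral (g - g ⊓ ((n : ℝ) • χ)) = D.integral g := by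
    intro n
    rw [D.integralSub hg (hinfU n), h2 n, sub_zero]
  have hconst : Tendsto (fun _ : ℕ => D.integral g) atTop (𝓝 0) := by
    simpa only [heq] using key
  exact (tendsto_nhds_unique hconst tendsto_const_nhds).symm

theorem memOfMonotoneLimit (hD : D.Complete) (g : ℕ → X → ℝ) (G : X → ℝ) (C : ℝ)
    (hmem : ∀ k, g k ∈ D.U) (hmono : ∀ k x, g k x ≤ g (k + 1) x)
    (hC : ∀ k, D.integral (g k) ≤ C)
    (hlim : ∀ x, Tendsto (fun k => g k x) atTop (𝓝 (G x))) : G ∈ D.U := by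
  set gs : ℕ → X → ℝ := fun n => Nat.casesOn n (g 0) (fun k => g (k + 1) - g k) with hgsdef
  have hgs0 : gs 0 = g 0 := rfl
  have hgsS : ∀ k, gs (k + 1) = g (k + 1) - g k := fun k => rfl
  have hmemgs : ∀ n, gs n ∈ D.U := by
    intro n
    cases n with
    | zero => exact hmem 0
    | succ k => exact D.subMem (hmem (k + 1)) (hmem k)
  have habs : ∀ k, |gs (k + 1)| = gs (k + 1) := by
    intro k
    funext x
    rw [Pi.abs_apply]
    refine abs_of_nonneg ?_
    rw [hgsS, Pi.sub_apply]
    linarith [hmono k x]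
  have hpsum : ∀ (N : ℕ) (x : X), ∑ i ∈ Finset.range (N + 1), gs i x = g N x := by
    intro N x
    induction N with
    | zero => simp [hgs0]
    | succ k ih =>
      rw [Finset.sum_range_succ, ih, hgsS, Pi.sub_apply]
      ring
  have hintnn : ∀ n, 0 ≤ D.integral |gs n| := fun n =>
    D.integral_nonneg (D.absMem (hmemgs n)) (fun x => abs_nonneg _)
  have hibound : ∀ N, ∑ i ∈ Finset.range N, D.integral |gs i| ≤
      D.integral |gs 0| + (C - D.integral (g 0)) := by
    intro N
    cases N with
    | zero =>
      simp only [Finset.range_zero, Finset.sum_empty]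
      have := hC 0
      have := hintnn 0
      linarith
    | succ M =>
      rw [Finset.sum_range_succ']
      have hsum2 : ∑ i ∈ Finset.range M, D.integral |gs (i + 1)| =
          D.integral (g M) - D.integral (g 0) := by
        have he : ∀ i, D.integral |gs (i + 1)| = D.integral (g (i + 1)) - D.integral (g i) := by
          intro i
          rw [habs i, hgsS, D.integralSub (hmem (i + 1)) (hmem i)]
        rw [Finset.sum_congr rfl (fun i _ => he i)]
        exact Finset.sum_range_sub (fun i => D.integral (g i)) M
      rw [hsum2, hgs0]
      have := hC M
      linarith
  have hSummable : Summable (fun n => D.integral |gs n|) :=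
    summable_of_sum_range_le hintnn hibound
  have hhs : ∀ x, (Summable fun n => |gs n x|) → HasSum (fun n => gs n x) (G x) := by
    intro x hx
    obtain ⟨T, hT⟩ := hx.of_abs
    have h1 : Tendsto (fun N => ∑ i ∈ Finset.range N, gs i x) atTop (𝓝 T) := hT.tendsto_sum_nat
    have h2 : Tendsto (fun N : ℕ => ∑ i ∈ Finset.range (N + 1), gs i x) atTop (𝓝 T) :=
      h1.comp (tendsto_add_atTop_nat 1)
    have h3 : Tendsto (fun N => g N x) atTop (𝓝 T) := h2.congr (fun N => hpsum N x)
    have hTG : T = G x := tendsto_nhds_unique h3 (hlim x)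
    exact hTG ▸ hT
  exact hD G gs ⟨hmemgs, hSummable, hhs⟩

theorem memOfAntitoneLimit (hD : D.Complete) (g : ℕ → X → ℝ) (G : X → ℝ) (C : ℝ)
    (hmem : ∀ k, g k ∈ D.U) (hmono : ∀ k x, g (k + 1) x ≤ g k x)
    (hC : ∀ k, C ≤ D.integral (g k))
    (hlim : ∀ x, Tendsto (fun k => g k x) atTop (𝓝 (G x))) : G ∈ D.U := by
  have hneg : -G ∈ D.U := by
    apply D.memOfMonotoneLimit hD (fun k => -g k) (-G) (-C)
    · exact fun k => D.negMem (hmem k)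
    · intro k x
      simp only [Pi.neg_apply]
      linarith [hmono k x]
    · intro k
      rw [D.integralNeg (hmem k)]
      linarith [hC k]
    · intro x
      simpa using (hlim x).neg
  simpa using D.negMem hneg


end DaniellSpace

/-- Partial supremum `sup_{m ≤ i ≤ m+k} fs i`. -/
def pSup {X : Type*} (fs : ℕ → X → ℝ) (m : ℕ) : ℕ → X → ℝ
  | 0 => fs m
  | (k + 1) => pSup fs m k ⊔ fs (m + k + 1)

theorem pSup_succ_apply {X : Type*} (fs : ℕ → X → ℝ) (m k : ℕ) (x : X) :
    pSup fs m (k + 1) x = pSup fs m k x ⊔ fs (m + k + 1) x := rfl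

theorem pSup_mono_k {X : Type*} (fs : ℕ → X → ℝ) (m : ℕ) (x : X) :
    Monotone (fun k => pSup fs m k x) := by
  apply monotone_nat_of_le_succ
  intro k
  rw [pSup_succ_apply]
  exact le_sup_left

theorem pSup_le {X : Type*} {fs : ℕ → X → ℝ} {m : ℕ} {x : X} {c : ℝ}
    (hb : ∀ i, fs (m + i) x ≤ c) : ∀ k, pSup fs m k x ≤ c := by
  intro k
  induction k with
  | zero => exact hb 0
  | succ k ih =>
    rw [pSup_succ_apply]
    exact sup_le ih (hb (k + 1))

theorem le_pSup {X : Type*} (fs : ℕ → X → ℝ) (m i : ℕ) (x : X) :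
    fs (m + i) x ≤ pSup fs m i x := by
  induction i with
  | zero => exact le_rfl
  | succ k _ =>
    rw [pSup_succ_apply]
    exact le_sup_right

theorem pSup_shift {X : Type*} (fs : ℕ → X → ℝ) (m : ℕ) (x : X) :
    ∀ k, pSup fs (m + 1) k x ≤ pSup fs m (k + 1) x := by
  intro k
  induction k with
  | zero =>
    rw [pSup_succ_apply]
    exact le_sup_right
  | succ k ih =>
    rw [pSup_succ_apply, pSup_succ_apply]
    have he : m + 1 + k + 1 = m + (k + 1) + 1 := by omega
    rw [he]
    exact sup_le_sup_right ih _

namespace DaniellSpace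

variable {X : Type*} (D : DaniellSpace X)

theorem pSupMem {fs : ℕ → X → ℝ} (hfs : ∀ n, fs n ∈ D.U) (m k : ℕ) :
    pSup fs m k ∈ D.U := by
  induction k with
  | zero => exact hfs m
  | succ k ih => exact D.sup_mem ih (hfs _)

/-- Upper envelope: `u m = sup_{k ≥ m} gs k ∈ U` and `F = limsup gs ∈ U`. -/
theorem envelope (hD : D.Complete) (gs : ℕ → X → ℝ) (h : X → ℝ)
    (hgs : ∀ n, gs n ∈ D.U) (hh : h ∈ D.U) (hdom : ∀ n x, |gs n x| ≤ h x) :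
    ∃ (u : ℕ → X → ℝ) (F : X → ℝ),
      (∀ m, u m ∈ D.U) ∧ F ∈ D.U ∧
      (∀ m k x, m ≤ k → gs k x ≤ u m x) ∧
      (∀ m x, u (m + 1) x ≤ u m x) ∧
      (∀ x, Tendsto (fun m => u m x) atTop (𝓝 (F x))) ∧
      (∀ x y, Tendsto (fun n => gs n x) atTop (𝓝 y) → F x = y) := by
  have hub : ∀ n x, gs n x ≤ h x := fun n x => (abs_le.mp (hdom n x)).2
  have hlb : ∀ n x, -h x ≤ gs n x := fun n x => (abs_le.mp (hdom n x)).1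
  have hpub : ∀ m k x, pSup gs m k x ≤ h x := fun m k x =>
    pSup_le (fun i => hub (m + i) x) k
  have hbdd : ∀ m x, BddAbove (Set.range fun k => pSup gs m k x) := by
    intro m x
    refine ⟨h x, ?_⟩
    rintro y ⟨k, rfl⟩
    exact hpub m k x
  set u : ℕ → X → ℝ := fun m x => ⨆ k, pSup gs m k x with hudef
  have hutend : ∀ m x, Tendsto (fun k => pSup gs m k x) atTop (𝓝 (u m x)) :=
    fun m x => tendsto_atTop_ciSup (pSup_mono_k gs m x) (hbdd m x)
  have hule : ∀ m x, u m x ≤ h x := fun m x => ciSup_le (fun k => hpub m k x)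
  have hgsle : ∀ m k x, m ≤ k → gs k x ≤ u m x := by
    intro m k x hmk
    obtain ⟨i, rfl⟩ := Nat.exists_eq_add_of_le hmk
    exact (le_pSup gs m i x).trans (le_ciSup (hbdd m x) i)
  have hulb : ∀ m x, -h x ≤ u m x := fun m x => (hlb m x).trans (hgsle m m x le_rfl)
  have humem : ∀ m, u m ∈ D.U := by
    intro m
    apply D.memOfMonotoneLimit hD (fun k => pSup gs m k) (u m) (D.integral h)
    · exact fun k => D.pSupMem hgs m k
    · exact fun k x => pSup_mono_k gs m x (Nat.le_succ k)
    · exact fun k => D.integralMono (D.pSupMem hgs m k) hh (fun x => hpub m k x)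
    · exact fun x => hutend m x
  have huanti : ∀ m x, u (m + 1) x ≤ u m x := by
    intro m x
    exact ciSup_le fun k => (pSup_shift gs m x k).trans (le_ciSup (hbdd m x) (k + 1))
  set F : X → ℝ := fun x => ⨅ m, u m x with hFdef
  have hbddb : ∀ x, BddBelow (Set.range fun m => u m x) := by
    intro x
    refine ⟨-h x, ?_⟩
    rintro y ⟨m, rfl⟩
    exact hulb m x
  have hFt : ∀ x, Tendsto (fun m => u m x) atTop (𝓝 (F x)) := fun x =>
    tendsto_atTop_ciInf (antitone_nat_of_succ_le fun m => huanti m x) (hbddb x)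
  have hFmem : F ∈ D.U := by
    apply D.memOfAntitoneLimit hD u F (-(D.integral h))
    · exact humem
    · exact fun m x => huanti m x
    · intro m
      have hm := D.integralMono (D.negMem hh) (humem m) (fun x => by simpa using hulb m x)
      rwa [D.integralNeg hh] at hm
    · exact hFt
  have hFval : ∀ x y, Tendsto (fun n => gs n x) atTop (𝓝 y) → F x = y := by
    intro x y hy
    have h1 : Tendsto (fun m => u m x) atTop (𝓝 y) := by
      rw [Metric.tendsto_atTop] at hy ⊢
      intro ε hε
      obtain ⟨N, hN⟩ := hy (ε / 2) (by linarith)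
      refine ⟨N, fun m hm => ?_⟩
      have hub2 : u m x ≤ y + ε / 2 := by
        apply ciSup_le
        intro k
        apply pSup_le
        intro i
        have hd := hN (m + i) (hm.trans (Nat.le_add_right m i))
        rw [Real.dist_eq] at hd
        have := (abs_lt.mp hd).2
        linarith
      have hlb2 : y - ε / 2 ≤ u m x := by
        have hd := hN m hm
        rw [Real.dist_eq] at hd
        have h3 := (abs_lt.mp hd).1
        have h4 := hgsle m m x le_rfl
        linarith
      rw [Real.dist_eq, abs_lt]
      constructor <;> linarith
    exact tendsto_nhds_unique (hFt x) h1
  exact ⟨u, F, humem, hFmem, hgsle, huanti, hFt, hFval⟩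

end DaniellSpace


/-- Dominated Convergence Theorem: in a complete Daniell space, if `fₙ → f` a.e. and
`|fₙ| ≤ h ∈ 𝒰` for all `n`, then `f ∈ 𝒰` and `fₙ → f` in norm. -/
theorem daniell_dominated_convergence {X : Type*} [Nonempty X] (D : DaniellSpace X)
    (hD : D.Complete) (fs : ℕ → X → ℝ) (f h : X → ℝ) (hfs : ∀ n, fs n ∈ D.U)
    (hh : h ∈ D.U) (hdom : ∀ n x, |fs n x| ≤ h x)
    (hae : ∃ S : Set X, D.NullSet S ∧
      ∀ x ∉ S, Tendsto (fun n => fs n x) atTop (𝓝 (f x))) :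
    f ∈ D.U ∧ Tendsto (fun n => D.integral |fs n - f|) atTop (𝓝 (0 : ℝ)) := by
  obtain ⟨S, hSnull, hSconv⟩ := hae
  set gs' : ℕ → X → ℝ := fun n => -fs n with hgs'def
  have hgs'mem : ∀ n, gs' n ∈ D.U := fun n => D.negMem (hfs n)
  have hdom' : ∀ n x, |gs' n x| ≤ h x := fun n x => by
    simpa [hgs'def] using hdom n x
  obtain ⟨u, F, humem, hFmem, hge, huanti, hut, hFval⟩ := D.envelope hD fs h hfs hh hdom
  obtain ⟨u', F', humem', hFmem', hge', huanti', hut', hFval'⟩ :=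
    D.envelope hD gs' h hgs'mem hh hdom'
  -- F = f and F' = -f off S
  have hFf : ∀ x, x ∉ S → F x = f x := fun x hx => hFval x (f x) (hSconv x hx)
  have hF'f : ∀ x, x ∉ S → F' x = -f x := fun x hx =>
    hFval' x (-f x) (by simpa [hgs'def] using (hSconv x hx).neg)
  -- f - F ∈ U via the null set
  have hχU := hSnull.1
  have hsubU : f - F ∈ D.U := by
    apply hD (f - F) (fun _ => S.indicator (fun _ => (1 : ℝ)))
    refine ⟨fun _ => hχU, ?_, ?_⟩
    · have habsχ : |S.indicator (fun _ => (1 : ℝ))| = S.indicator (fun _ => (1 : ℝ)) := by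
        funext x
        exact abs_of_nonneg (Set.indicator_nonneg (fun _ _ => zero_le_one) x)
      simpa only [habsχ, hSnull.2] using summable_zero
    · intro x hx
      by_cases hxS : x ∈ S
      · exfalso
        have he : (fun _ : ℕ => |S.indicator (fun _ => (1 : ℝ)) x|) = fun _ => (1 : ℝ) := by
          funext n
          simp [Set.indicator_of_mem hxS]
        rw [he] at hx
        have := (summable_const_iff (1 : ℝ)).mp hx
        norm_num at this
      · have h0 : S.indicator (fun _ => (1 : ℝ)) x = 0 := Set.indicator_of_notMem hxS _
        have h1 : (f - F) x = 0 := by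
          rw [Pi.sub_apply, hFf x hxS, sub_self]
        rw [h1]
        simpa only [h0] using hasSum_zero
  have hfU : f ∈ D.U := by
    have hmem := D.add_mem hFmem hsubU
    have he : F + (f - F) = f := by
      funext x
      simp only [Pi.add_apply, Pi.sub_apply]
      ring
    rwa [he] at hmem
  refine ⟨hfU, ?_⟩
  -- v n = u n + u' n, w = F + F'
  set v : ℕ → X → ℝ := fun n => u n + u' n with hvdef
  set w : X → ℝ := F + F' with hwdef
  have hvmem : ∀ n, v n ∈ D.U := fun n => D.add_mem (humem n) (humem' n)
  have hwmem : w ∈ D.U := D.add_mem hFmem hFmem'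
  have hvnn : ∀ n x, 0 ≤ v n x := by
    intro n x
    have h1 := hge n n x le_rfl
    have h2 := hge' n n x le_rfl
    simp only [hvdef, Pi.add_apply]
    simp only [hgs'def, Pi.neg_apply] at h2
    linarith
  have hvA : ∀ x, Antitone fun n => v n x := by
    intro x
    apply antitone_nat_of_succ_le
    intro n
    simp only [hvdef, Pi.add_apply]
    exact add_le_add (huanti n x) (huanti' n x)
  have hvt : ∀ x, Tendsto (fun n => v n x) atTop (𝓝 (w x)) := by
    intro x
    simpa only [hvdef, hwdef, Pi.add_apply] using (hut x).add (hut' x)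
  have hwnn : ∀ x, 0 ≤ w x := fun x => ge_of_tendsto' (hvt x) (fun n => hvnn n x)
  have hwS : ∀ x, x ∉ S → w x = 0 := by
    intro x hx
    simp only [hwdef, Pi.add_apply, hFf x hx, hF'f x hx]
    ring
  have hwint : D.integral w = 0 := D.integralEqZeroOnNull hSnull hwmem hwnn hwS
  -- |f - F| has zero integral
  have hfFU : |f - F| ∈ D.U := D.absMem hsubU
  have hfFint : D.integral |f - F| = 0 := by
    apply D.integralEqZeroOnNull hSnull hfFU (fun x => by rw [Pi.abs_apply]; exact abs_nonneg _)
    intro x hx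
    rw [Pi.abs_apply, Pi.sub_apply, hFf x hx, sub_self, abs_zero]
  -- integral of v n tends to zero
  have hvwanti : Antitone fun n => v n - w := by
    intro a b hab
    rw [Pi.le_def]
    intro x
    simp only [Pi.sub_apply]
    exact sub_le_sub_right (hvA x hab) _
  have hvwt : ∀ x, Tendsto (fun n => (v n - w) x) atTop (𝓝 (0 : ℝ)) := by
    intro x
    have := (hvt x).sub (tendsto_const_nhds (x := w x))
    simpa only [Pi.sub_apply, sub_self] using this
  have key := D.integral_tendsto_zero (fun n => v n - w)
    (fun n => D.subMem (hvmem n) hwmem) hvwanti hvwt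
  have hvint : Tendsto (fun n => D.integral (v n)) atTop (𝓝 (0 : ℝ)) := by
    have he : (fun n => D.integral (v n)) = fun n => D.integral (v n - w) := by
      funext n
      rw [D.integralSub (hvmem n) hwmem, hwint, sub_zero]
    rw [he]
    exact key
  -- squeeze: 0 ≤ ∫|fs n - f| ≤ ∫ v n
  have hFle : ∀ n x, F x ≤ u n x := by
    intro n x
    have hA : Antitone fun m => u m x := antitone_nat_of_succ_le fun m => huanti m x
    exact le_of_tendsto (hut x) ((eventually_ge_atTop n).mono fun m hm => hA hm)
  have hFge : ∀ n x, -(u' n x) ≤ F x := by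
    intro n x
    apply ge_of_tendsto' (hut x)
    intro m
    have h1 := hge m (max m n) x (le_max_left m n)
    have h2 := hge' n (max m n) x (le_max_right m n)
    simp only [hgs'def, Pi.neg_apply] at h2
    linarith
  have habs_le : ∀ n x, |fs n x - F x| ≤ v n x := by
    intro n x
    have h1 := hge n n x le_rfl
    have h2 := hge' n n x le_rfl
    simp only [hgs'def, Pi.neg_apply] at h2
    have h3 := hFle n x
    have h4 := hFge n x
    rw [abs_le]
    simp only [hvdef, Pi.add_apply]
    constructor <;> linarith
  apply squeeze_zero
    (fun n => D.integral_nonneg (D.absMem (D.subMem (hfs n) hfU))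
      (fun x => by rw [Pi.abs_apply]; exact abs_nonneg _))
    ?_ hvint
  intro n
  have haddU : v n + |f - F| ∈ D.U := D.add_mem (hvmem n) hfFU
  have hle : ∀ x, |fs n - f| x ≤ (v n + |f - F|) x := by
    intro x
    simp only [Pi.abs_apply, Pi.sub_apply, Pi.add_apply]
    calc |fs n x - f x| ≤ |fs n x - F x| + |F x - f x| := abs_sub_le _ _ _
      _ ≤ v n x + |f x - F x| := by
          rw [abs_sub_comm (F x) (f x)]
          exact add_le_add (habs_le n x) le_rfl
  have hmono := D.integralMono (D.absMem (D.subMem (hfs n) hfU)) haddU hle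
  rwa [D.integral_add (hvmem n) hfFU, hfFint, add_zero] at hmono
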